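/- The projection operators satisfy: (1) g ∘ Π_E = 0 and Π_E ∘ g = 0; (2) d ∘ Π = Π ∘ d and d ∘ Π_E = Π_E ∘ d; (3) Π_0 ∘ Π_E ∘ Π_0 = Π_0 and Π_E ∘ Π_0 ∘ Π_E = Π_E. -/

import Mathlib

/-- For an `s`-multicomplex with weights between `0` and `Q`, total differential `d`,
partial inverse `g` of `d₀`, `b := g∘d₀ − g∘d`,
`Π := (∑_{j=0}^{Q} b^j) ∘ g ∘ d + d ∘ (∑_{j=0}^{Q} b^j) ∘ g`, `Π_E := id − Π`, and
`Π₀ := id − g∘d₀ − d₀∘g`, the projection operators satisfy: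
(1) `g ∘ Π_E = 0` and `Π_E ∘ g = 0`;
(2) `d ∘ Π = Π ∘ d` and `d ∘ Π_E = Π_E ∘ d`;
(3) `Π₀ ∘ Π_E ∘ Π₀ = Π₀` and `Π_E ∘ Π₀ ∘ Π_E = Π_E`. -/
theorem projection_operators_identities
    {R M : Type*} [CommRing R] [AddCommGroup M] [Module R M]
    (Mgr : ℤ × ℤ → Submodule R M)
    (hinternal : DirectSum.IsInternal Mgr)
    (s : ℕ) (D : ℕ → M →ₗ[R] M)
    (hDvan : ∀ i : ℕ, s ≤ i → D i = 0)
    (hDdeg : ∀ (i : ℕ) (a b : ℤ), ∀ x ∈ Mgr (a, b), D i x ∈ Mgr (a + (i : ℤ), b + 1 - (i : ℤ)))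
    (hDD : ∀ n : ℕ, ∑ i ∈ Finset.range (n + 1), D i ∘ₗ D (n - i) = 0)
    (Q : ℕ) (hQ : ∀ a b : ℤ, a < 0 ∨ (Q : ℤ) < a → Mgr (a, b) = ⊥)
    (d : M →ₗ[R] M) (hd : d = ∑ i ∈ Finset.range (s + 1), D i)
    (g : M →ₗ[R] M)
    (hgdeg : ∀ (a b : ℤ), ∀ x ∈ Mgr (a, b), g x ∈ Mgr (a, b - 1))
    (hgg : g ∘ₗ g = 0)
    (hgdg : g ∘ₗ D 0 ∘ₗ g = g)
    (hdgd : D 0 ∘ₗ g ∘ₗ D 0 = D 0)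
    (b : M →ₗ[R] M) (hb : b = g ∘ₗ D 0 - g ∘ₗ d)
    (Pi : M →ₗ[R] M)
    (hPi : Pi = ((∑ j ∈ Finset.range (Q + 1), b ^ j) ∘ₗ g) ∘ₗ d
        + (d ∘ₗ (∑ j ∈ Finset.range (Q + 1), b ^ j)) ∘ₗ g)
    (PiE : M →ₗ[R] M) (hPiE : PiE = LinearMap.id - Pi)
    (Pi0 : M →ₗ[R] M) (hPi0 : Pi0 = LinearMap.id - g ∘ₗ D 0 - D 0 ∘ₗ g) :
    (g ∘ₗ PiE = 0 ∧ PiE ∘ₗ g = 0) ∧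
    (d ∘ₗ Pi = Pi ∘ₗ d ∧ d ∘ₗ PiE = PiE ∘ₗ d) ∧
    ((Pi0 ∘ₗ PiE) ∘ₗ Pi0 = Pi0 ∧ (PiE ∘ₗ Pi0) ∘ₗ PiE = PiE) := by
  -- convert everything to the ring structure of `M →ₗ[R] M`
  simp only [← Module.End.mul_eq_comp] at hgg hgdg hdgd hb hPi hPi0 hDD ⊢
  simp only [← Module.End.one_eq_id] at hPiE hPi0
  set T : M →ₗ[R] M := ∑ j ∈ Finset.range (Q + 1), b ^ j with hT
  -- basic relations
  have hgdg' : (g * D 0) * g = g := by rw [mul_assoc]; exact hgdg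
  have hD00 : D 0 * D 0 = 0 := by simpa using hDD 0
  -- d * d = 0 (Cauchy product argument)
  have hdd : d * d = 0 := by
    have flip := Finset.sum_range_diag_flip (2 * s + 2) (fun i j => D i * D j)
    have lhs0 : (∑ m ∈ Finset.range (2 * s + 2),
        ∑ k ∈ Finset.range (m + 1), D k * D (m - k)) = 0 :=
      Finset.sum_eq_zero fun m _ => hDD m
    have step1 : ∀ m ∈ Finset.range (2 * s + 2),
        (∑ k ∈ Finset.range (2 * s + 2 - m), D m * D k) = D m * d := by
      intro m hm
      by_cases hms : s ≤ m
      · simp [hDvan m hms]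
      · push_neg at hms
        rw [hd, Finset.mul_sum]
        symm
        apply Finset.sum_subset (Finset.range_subset_range.2 (by omega))
        intro k hk hk2
        simp only [Finset.mem_range] at hk hk2
        have : s ≤ k := by omega
        simp [hDvan k this]
    have rhs : (∑ m ∈ Finset.range (2 * s + 2),
        ∑ k ∈ Finset.range (2 * s + 2 - m), D m * D k) = d * d := by
      calc (∑ m ∈ Finset.range (2 * s + 2), ∑ k ∈ Finset.range (2 * s + 2 - m), D m * D k)
          = ∑ m ∈ Finset.range (2 * s + 2), D m * d := Finset.sum_congr rfl step1
        _ = ∑ m ∈ Finset.range (s + 1), D m * d := by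
            symm
            apply Finset.sum_subset (Finset.range_subset_range.2 (by omega))
            intro k hk hk2
            simp only [Finset.mem_range] at hk hk2
            have : s ≤ k := by omega
            simp [hDvan k this]
        _ = d * d := by rw [← Finset.sum_mul, ← hd]
    rw [← rhs, ← flip, lhs0]
  -- b raises the weight strictly, so b^(Q+1) = 0
  have hbapply : ∀ x : M, b x = - ∑ i ∈ Finset.range s, g (D (i + 1) x) := by
    intro x
    have hdx : d x = (∑ i ∈ Finset.range s, D (i + 1) x) + D 0 x := by
      rw [hd]
      rw [LinearMap.coe_sum, Finset.sum_apply]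
      exact Finset.sum_range_succ' (fun i => D i x) s
    rw [hb, LinearMap.sub_apply, Module.End.mul_apply, Module.End.mul_apply, hdx]
    rw [map_add, map_sum]
    abel
  have hbk : ∀ (k : ℕ) (a β : ℤ) (x : M), x ∈ Mgr (a, β) → (Q : ℤ) < a + k →
      (b ^ k) x = 0 := by
    intro k
    induction k with
    | zero =>
      intro a β x hx hlt
      have hbot : Mgr (a, β) = ⊥ := hQ a β (Or.inr (by push_cast at hlt; omega))
      rw [hbot, Submodule.mem_bot] at hx
      simp [hx]
    | succ k ih =>
      intro a β x hx hlt
      rw [pow_succ, Module.End.mul_apply, hbapply x, map_neg, map_sum, neg_eq_zero]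
      apply Finset.sum_eq_zero
      intro i _
      have h1 : D (i + 1) x ∈ Mgr (a + ((i + 1 : ℕ) : ℤ), β + 1 - ((i + 1 : ℕ) : ℤ)) :=
        hDdeg (i + 1) a β x hx
      have h2 := hgdeg _ _ _ h1
      exact ih _ _ _ h2 (by push_cast at hlt ⊢; omega)
  have hbQ : b ^ (Q + 1) = 0 := by
    apply LinearMap.ext
    intro x
    rw [LinearMap.zero_apply]
    have hx : x ∈ ⨆ p, Mgr p := by
      rw [hinternal.submodule_iSup_eq_top]; trivial
    refine Submodule.iSup_induction (motive := fun y => (b ^ (Q + 1)) y = 0) Mgr hx ?_ (map_zero _) ?_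
    · rintro ⟨a, β⟩ y hy
      by_cases ha : a < 0
      · have hbot : Mgr (a, β) = ⊥ := hQ a β (Or.inl ha)
        rw [hbot, Submodule.mem_bot] at hy
        simp [hy]
      · exact hbk (Q + 1) a β y hy (by push_cast; omega)
    · intro y z hy hz
      rw [map_add, hy, hz, add_zero]
  -- algebraic identities
  have hgb : g * b = 0 := by
    rw [hb, mul_sub, ← mul_assoc, ← mul_assoc, hgg, zero_mul, zero_mul, sub_zero]
  have hgT : g * T = g := by
    rw [hT, Finset.mul_sum, Finset.sum_range_succ']
    have hz : ∀ j, g * b ^ (j + 1) = 0 := fun j => by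
      rw [pow_succ', ← mul_assoc, hgb, zero_mul]
    simp [hz]
  have hgd0b : (g * D 0) * b = b := by
    rw [hb, mul_sub, ← mul_assoc, ← mul_assoc, hgdg', ← hb]
  have hTsucc : (∑ j ∈ Finset.range Q, b ^ (j + 1)) = T - 1 := by
    rw [eq_sub_iff_add_eq, hT, Finset.sum_range_succ' (fun j => b ^ j) Q, pow_zero]
  have hgd0T : (g * D 0) * T = g * D 0 + (T - 1) := by
    rw [hT, Finset.mul_sum, Finset.sum_range_succ']
    have hk : ∀ j, (g * D 0) * b ^ (j + 1) = b ^ (j + 1) := fun j => by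
      rw [pow_succ', ← mul_assoc, hgd0b]
    simp only [hk, pow_zero, mul_one]
    rw [hTsucc]; abel
  have hTb : T * b = T - 1 := by
    rw [hT, Finset.sum_mul]
    have hk : ∀ j, b ^ j * b = b ^ (j + 1) := fun j => (pow_succ b j).symm
    simp only [hk]
    rw [Finset.sum_range_succ, hbQ, add_zero, hTsucc]
  have hbT : b * T = T - 1 := by
    rw [hT, Finset.mul_sum]
    simp only [← pow_succ']
    rw [Finset.sum_range_succ, hbQ, add_zero, hTsucc]
  have hgd : g * d = g * D 0 - b := by rw [hb]; abel
  have hgD0 : g * D 0 = b + g * d := by rw [hb]; abel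
  -- composite identities
  have E1 : g * (T * g) = 0 := by rw [← mul_assoc, hgT, hgg]
  have E2 : (g * d) * (T * g) = g := by
    calc (g * d) * (T * g) = (g * D 0 - b) * (T * g) := by rw [hgd]
      _ = ((g * D 0) * T) * g - (b * T) * g := by noncomm_ring
      _ = (g * D 0 + (T - 1)) * g - (T - 1) * g := by rw [hgd0T, hbT]
      _ = (g * D 0) * g + ((T - 1) * g - (T - 1) * g) := by noncomm_ring
      _ = g := by rw [hgdg']; abel
  have E3 : (T * (g * d)) * g = g := by
    calc (T * (g * d)) * g = (T * (g * D 0 - b)) * g := by rw [hgd]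
      _ = T * ((g * D 0) * g) - (T * b) * g := by noncomm_ring
      _ = T * g - (T - 1) * g := by rw [hgdg', hTb]
      _ = g := by noncomm_ring
  have E4 : (g * D 0) * (T * g) = T * g := by
    calc (g * D 0) * (T * g) = ((g * D 0) * T) * g := (mul_assoc (g * D 0) T g).symm
      _ = (g * D 0 + (T - 1)) * g := by rw [hgd0T]
      _ = (g * D 0) * g + (T * g - g) := by noncomm_ring
      _ = g + (T * g - g) := by rw [hgdg']
      _ = T * g := by abel
  have E5 : (g * D 0) * d = (b * d) := by
    calc (g * D 0) * d = (b + g * d) * d := by rw [hgD0]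
      _ = b * d + g * (d * d) := by noncomm_ring
      _ = b * d := by rw [hdd, mul_zero, add_zero]
  have E6 : (T * g) * (D 0 * g) = T * g := by
    calc (T * g) * (D 0 * g) = T * (g * (D 0 * g)) := by noncomm_ring
      _ = T * g := by rw [hgdg]
  have E7 : (g * d) * D 0 = -(b * D 0) := by
    calc (g * d) * D 0 = (g * D 0 - b) * D 0 := by rw [hgd]
      _ = g * (D 0 * D 0) - b * D 0 := by noncomm_ring
      _ = -(b * D 0) := by rw [hD00, mul_zero, zero_sub]
  have E9 : (T * g) * (T * g) = 0 := by
    calc (T * g) * (T * g) = T * (g * (T * g)) := by noncomm_ring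
      _ = 0 := by rw [E1, mul_zero]
  have hPi' : Pi = (T * g) * d + d * (T * g) := by rw [hPi]; noncomm_ring
  have hPiE' : PiE = 1 - Pi := hPiE
  have hPi0' : Pi0 = 1 - g * D 0 - D 0 * g := hPi0
  -- (1)
  have hgPi : g * Pi = g := by
    calc g * Pi = (g * (T * g)) * d + (g * d) * (T * g) := by rw [hPi']; noncomm_ring
      _ = 0 * d + g := by rw [E1, E2]
      _ = g := by rw [zero_mul, zero_add]
  have hPig : Pi * g = g := by
    calc Pi * g = (T * (g * d)) * g + d * (T * (g * g)) := by rw [hPi']; noncomm_ring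
      _ = g + d * (T * 0) := by rw [E3, hgg]
      _ = g := by rw [mul_zero, mul_zero, add_zero]
  have hgPiE : g * PiE = 0 := by
    rw [hPiE', mul_sub, mul_one, hgPi, sub_self]
  have hPiEg : PiE * g = 0 := by
    rw [hPiE', sub_mul, one_mul, hPig, sub_self]
  -- (2)
  have hdPi : d * Pi = Pi * d := by
    calc d * Pi = d * ((T * g) * d) + (d * d) * (T * g) := by rw [hPi']; noncomm_ring
      _ = d * ((T * g) * d) := by rw [hdd, zero_mul, add_zero]
      _ = (T * g) * (d * d) + d * ((T * g) * d) := by rw [hdd, mul_zero, zero_add]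
      _ = Pi * d := by rw [hPi']; noncomm_ring
  have hdPiE : d * PiE = PiE * d := by
    rw [hPiE', mul_sub, sub_mul, mul_one, one_mul, hdPi]
  -- (3)
  have hdh : ((T * g) * d) * (T * g) = T * g := by
    calc ((T * g) * d) * (T * g) = T * ((g * d) * (T * g)) := by noncomm_ring
      _ = T * g := by rw [E2]
  have hPi2 : Pi * Pi = Pi := by
    calc Pi * Pi
        = (((T * g) * d) * (T * g)) * d + (T * g) * ((d * d) * (T * g))
          + d * (((T * g) * (T * g)) * d) + d * (((T * g) * d) * (T * g)) := by
          rw [hPi']; noncomm_ring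
      _ = (T * g) * d + (T * g) * (0 * (T * g)) + d * (0 * d) + d * (T * g) := by
          rw [hdh, hdd, E9]
      _ = (T * g) * d + d * (T * g) := by
          rw [zero_mul, zero_mul, mul_zero, mul_zero, add_zero, add_zero]
      _ = Pi := hPi'.symm
  have hPiE2 : PiE * PiE = PiE := by
    calc PiE * PiE = 1 - Pi - Pi + Pi * Pi := by rw [hPiE']; noncomm_ring
      _ = 1 - Pi := by rw [hPi2]; abel
      _ = PiE := hPiE'.symm
  have G3b : (PiE * Pi0) * PiE = PiE := by
    calc (PiE * Pi0) * PiE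
        = PiE * PiE - (PiE * g) * (D 0 * PiE) - (PiE * D 0) * (g * PiE) := by
          rw [hPi0']; noncomm_ring
      _ = PiE := by rw [hPiE2, hPiEg, hgPiE, zero_mul, mul_zero, sub_zero, sub_zero]
  -- auxiliary identities for G3a
  have hgd0T1 : (g * D 0) * (T - 1) = T - 1 := by
    rw [mul_sub, mul_one, hgd0T]; abel
  have hgD0Pi : (g * D 0) * Pi = (T * g) * d + (b * d) * (T * g) := by
    calc (g * D 0) * Pi = ((g * D 0) * (T * g)) * d + ((g * D 0) * d) * (T * g) := by
          rw [hPi']; noncomm_ring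
      _ = (T * g) * d + (b * d) * (T * g) := by rw [E4, E5]
  have hPiD0g : Pi * (D 0 * g) = d * (T * g) - (T - 1) * (D 0 * g) := by
    calc Pi * (D 0 * g) = (T * ((g * d) * D 0)) * g + d * ((T * g) * (D 0 * g)) := by
          rw [hPi']; noncomm_ring
      _ = (T * (-(b * D 0))) * g + d * (T * g) := by rw [E7, E6]
      _ = -(((T * b) * D 0) * g) + d * (T * g) := by noncomm_ring
      _ = -((((T - 1)) * D 0) * g) + d * (T * g) := by rw [hTb]
      _ = d * (T * g) - (T - 1) * (D 0 * g) := by noncomm_ring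
  have hgD0PiD0g : (g * D 0) * (Pi * (D 0 * g)) = (b * d) * (T * g) - (T - 1) * (D 0 * g) := by
    calc (g * D 0) * (Pi * (D 0 * g))
        = ((g * D 0) * d) * (T * g) - ((g * D 0) * (T - 1)) * (D 0 * g) := by
          rw [hPiD0g]; noncomm_ring
      _ = (b * d) * (T * g) - (T - 1) * (D 0 * g) := by rw [E5, hgd0T1]
  have hAB : (g * D 0) * (D 0 * g) = 0 := by
    have h : (g * D 0) * (D 0 * g) = g * ((D 0 * D 0) * g) := by noncomm_ring
    rw [h, hD00, zero_mul, mul_zero]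
  have step1 : PiE * Pi0 = PiE - PiE * (D 0 * g) := by
    calc PiE * Pi0 = PiE - (PiE * g) * D 0 - PiE * (D 0 * g) := by
          rw [hPi0']; noncomm_ring
      _ = PiE - PiE * (D 0 * g) := by rw [hPiEg, zero_mul, sub_zero]
  have G3a : (Pi0 * PiE) * Pi0 = Pi0 := by
    calc (Pi0 * PiE) * Pi0 = Pi0 * (PiE * Pi0) := by rw [mul_assoc]
      _ = Pi0 * (PiE - PiE * (D 0 * g)) := by rw [step1]
      _ = PiE - PiE * (D 0 * g) - (g * D 0) * PiE + (g * D 0) * (PiE * (D 0 * g))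
          - D 0 * ((g * PiE) - (g * PiE) * (D 0 * g)) := by
          rw [hPi0']; noncomm_ring
      _ = PiE - PiE * (D 0 * g) - (g * D 0) * PiE + (g * D 0) * (PiE * (D 0 * g)) := by
          rw [hgPiE, zero_mul, sub_zero, mul_zero, sub_zero]
      _ = 1 - Pi - (D 0 * g) + Pi * (D 0 * g) - (g * D 0) + (g * D 0) * Pi
          + (g * D 0) * (D 0 * g) - (g * D 0) * (Pi * (D 0 * g)) := by
          rw [hPiE']; noncomm_ring
      _ = 1 - ((T * g) * d + d * (T * g)) - (D 0 * g)
          + (d * (T * g) - (T - 1) * (D 0 * g)) - (g * D 0)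
          + ((T * g) * d + (b * d) * (T * g)) + 0
          - ((b * d) * (T * g) - (T - 1) * (D 0 * g)) := by
          rw [hgD0PiD0g, hPiD0g, hgD0Pi, hAB, hPi']
      _ = 1 - g * D 0 - D 0 * g := by abel
      _ = Pi0 := hPi0'.symm
  exact ⟨⟨hgPiE, hPiEg⟩, ⟨hdPi, hdPiE⟩, G3a, G3b⟩
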